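/- Let |Ψ⟩ and |Φ⟩ be nonzero vectors in a finite-dimensional complex inner product space, with normalized versions |Ψ̃⟩ = |Ψ⟩/‖Ψ‖ and |Φ̃⟩ = |Φ⟩/‖Φ‖. Suppose there are constants R₁ ≥ R₂ > 0 and Θ ∈ [0, π/2) such that, writing Ψ and Φ in coordinates ψ(σ), φ(σ) over a basis indexed by σ with φ(σ) ≠ 0 for all σ, the ratios r(σ) = ψ(σ)/φ(σ) satisfy R₂ ≤ |r(σ)|² ≤ R₁ and |arg r(σ)| ≤ Θ for all σ. Then ‖ |Ψ̃⟩ - |Φ̃⟩ ‖² ≤ 2 - 2√(R₂/R₁)·cos(Θ). -/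

import Mathlib

open Real

theorem normalized_state_diff_bound {ι : Type*} [Fintype ι]
    (Ψ Φ : EuclideanSpace ℂ ι) (R₁ R₂ Θ : ℝ)
    (hΨ : Ψ ≠ 0) (hΦ : ∀ σ, Φ σ ≠ 0)
    (hR : R₁ ≥ R₂) (hR₂ : 0 < R₂)
    (hΘ0 : 0 ≤ Θ) (hΘ1 : Θ < π / 2)
    (hlo : ∀ σ, R₂ ≤ ‖Ψ σ / Φ σ‖ ^ 2)
    (hhi : ∀ σ, ‖Ψ σ / Φ σ‖ ^ 2 ≤ R₁)
    (harg : ∀ σ, |Complex.arg (Ψ σ / Φ σ)| ≤ Θ) :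
    ‖‖Ψ‖⁻¹ • Ψ - ‖Φ‖⁻¹ • Φ‖ ^ 2 ≤ 2 - 2 * Real.sqrt (R₂ / R₁) * Real.cos Θ := by
  classical
  rcases isEmpty_or_nonempty ι with h | h
  · exact absurd (Subsingleton.elim Ψ 0) hΨ
  have hR₁ : 0 < R₁ := lt_of_lt_of_le hR₂ hR
  have hπ := Real.pi_pos
  have hcos : 0 ≤ Real.cos Θ :=
    Real.cos_nonneg_of_mem_Icc ⟨by linarith, le_of_lt hΘ1⟩
  have hA : 0 < ‖Ψ‖ := norm_pos_iff.mpr hΨ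
  have hΦ0 : Φ ≠ 0 := by
    intro hc
    exact hΦ (Classical.arbitrary ι) (by simp [hc])
  have hB : 0 < ‖Φ‖ := norm_pos_iff.mpr hΦ0
  set A := ‖Ψ‖ with hAdef
  set B := ‖Φ‖ with hBdef
  -- pointwise bound on real part of ratio
  have hre : ∀ σ, Real.sqrt R₂ * Real.cos Θ ≤ (Ψ σ / Φ σ).re := by
    intro σ
    set r := Ψ σ / Φ σ with hr
    have habs : Real.sqrt R₂ ≤ ‖r‖ := by
      calc Real.sqrt R₂ ≤ Real.sqrt (‖r‖ ^ 2) := Real.sqrt_le_sqrt (hlo σ)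
        _ = ‖r‖ := Real.sqrt_sq (norm_nonneg r)
    have hrpos : 0 < ‖r‖ := lt_of_lt_of_le (Real.sqrt_pos.mpr hR₂) habs
    have hrne : r ≠ 0 := by
      intro hc; rw [hc] at hrpos; simp at hrpos
    have hcosr : Real.cos Θ ≤ Real.cos (Complex.arg r) := by
      rw [← Real.cos_abs (Complex.arg r)]
      exact Real.cos_le_cos_of_nonneg_of_le_pi (abs_nonneg _) (by linarith) (harg σ)
    have hre_eq : r.re = ‖r‖ * Real.cos (Complex.arg r) := by
      rw [Complex.cos_arg hrne]
      field_simp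
    rw [hre_eq]
    exact mul_le_mul habs hcosr hcos (norm_nonneg r)
  -- norms squared as sums
  have hB2 : B ^ 2 = ∑ σ, ‖Φ σ‖ ^ 2 := by
    rw [hBdef, EuclideanSpace.norm_eq, Real.sq_sqrt (by positivity)]
  have hA2 : A ^ 2 = ∑ σ, ‖Ψ σ‖ ^ 2 := by
    rw [hAdef, EuclideanSpace.norm_eq, Real.sq_sqrt (by positivity)]
  -- inner product real part
  have hinner_eq : (inner ℂ Ψ Φ : ℂ).re = ∑ σ, (Ψ σ / Φ σ).re * ‖Φ σ‖ ^ 2 := by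
    rw [PiLp.inner_apply, Complex.re_sum]
    refine Finset.sum_congr rfl fun σ _ => ?_
    have hφ := hΦ σ
    have hφc : (starRingEnd ℂ) (Φ σ) ≠ 0 := by simpa using hφ
    have h1 : (inner ℂ (Ψ σ) (Φ σ) : ℂ)
        = (starRingEnd ℂ) (Ψ σ / Φ σ) * ((‖Φ σ‖ : ℂ)) ^ 2 := by
      rw [RCLike.inner_apply, map_div₀, ← Complex.ofReal_pow, ← Complex.normSq_eq_norm_sq,
        ← Complex.mul_conj]
      field_simp
    rw [h1, ← Complex.ofReal_pow, Complex.mul_re, Complex.ofReal_re, Complex.ofReal_im,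
      Complex.conj_re]
    ring
  have hinner_lb : Real.sqrt R₂ * Real.cos Θ * B ^ 2 ≤ (inner ℂ Ψ Φ : ℂ).re := by
    rw [hinner_eq, hB2, Finset.mul_sum]
    apply Finset.sum_le_sum
    intro σ _
    have := hre σ
    have h2 : (0:ℝ) ≤ ‖Φ σ‖ ^ 2 := by positivity
    nlinarith
  -- bound A ≤ sqrt R₁ * B
  have hAle : A ≤ Real.sqrt R₁ * B := by
    have hA2le : A ^ 2 ≤ R₁ * B ^ 2 := by
      rw [hA2, hB2, Finset.mul_sum]
      apply Finset.sum_le_sum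
      intro σ _
      have habsψ : ‖Ψ σ‖ = ‖Ψ σ / Φ σ‖ * ‖Φ σ‖ := by
        rw [← norm_mul, div_mul_cancel₀ _ (hΦ σ)]
      rw [habsψ, mul_pow]
      have := hhi σ
      have h2 : (0:ℝ) ≤ ‖Φ σ‖ ^ 2 := by positivity
      nlinarith
    have : A ^ 2 ≤ (Real.sqrt R₁ * B) ^ 2 := by
      rw [mul_pow, Real.sq_sqrt hR₁.le]
      exact hA2le
    calc A = Real.sqrt (A ^ 2) := (Real.sqrt_sq hA.le).symm
      _ ≤ Real.sqrt (R₁ * B ^ 2) := Real.sqrt_le_sqrt hA2le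
      _ = Real.sqrt R₁ * B := by
          rw [Real.sqrt_mul hR₁.le, Real.sqrt_sq hB.le]
  -- key inequality
  have key : Real.sqrt (R₂ / R₁) * Real.cos Θ ≤ A⁻¹ * B⁻¹ * (inner ℂ Ψ Φ : ℂ).re := by
    have hAB : 0 < A * B := mul_pos hA hB
    have hABle : A * B ≤ Real.sqrt R₁ * B ^ 2 := by
      have := mul_le_mul_of_nonneg_right hAle hB.le
      nlinarith
    have hnum : (0:ℝ) ≤ Real.sqrt R₂ * Real.cos Θ * B ^ 2 := by positivity
    calc Real.sqrt (R₂ / R₁) * Real.cos Θ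
        = (Real.sqrt R₂ * Real.cos Θ * B ^ 2) / (Real.sqrt R₁ * B ^ 2) := by
          rw [Real.sqrt_div hR₂.le]
          field_simp
      _ ≤ (Real.sqrt R₂ * Real.cos Θ * B ^ 2) / (A * B) :=
          div_le_div_of_nonneg_left hnum hAB hABle
      _ ≤ (inner ℂ Ψ Φ : ℂ).re / (A * B) :=
          (div_le_div_iff_of_pos_right hAB).mpr hinner_lb
      _ = A⁻¹ * B⁻¹ * (inner ℂ Ψ Φ : ℂ).re := by
          field_simp
  -- expand the norm
  have hnΨ : ‖A⁻¹ • Ψ‖ = 1 := by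
    rw [norm_smul, norm_inv, Real.norm_of_nonneg hA.le, inv_mul_cancel₀ hA.ne']
  have hnΦ : ‖B⁻¹ • Φ‖ = 1 := by
    rw [norm_smul, norm_inv, Real.norm_of_nonneg hB.le, inv_mul_cancel₀ hB.ne']
  have hexp : ‖A⁻¹ • Ψ - B⁻¹ • Φ‖ ^ 2
      = 2 - 2 * (A⁻¹ * B⁻¹ * (inner ℂ Ψ Φ : ℂ).re) := by
    rw [@norm_sub_sq ℂ, hnΨ, hnΦ]
    rw [RCLike.real_smul_eq_coe_smul (K := ℂ), RCLike.real_smul_eq_coe_smul (K := ℂ),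
      inner_smul_left, inner_smul_right]
    simp [Complex.mul_re]
    ring
  rw [hexp]
  nlinarith [key, hcos, Real.sqrt_nonneg (R₂ / R₁)]
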